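/- Let A → R be a flat ring homomorphism of commutative Noetherian rings and a ∈ R an element such that for every prime ideal p of A, the image of a in R ⊗_A κ(p) is a non-zerodivisor (where κ(p) is the residue field at p). Then R/aR is flat over A. -/

import Mathlib

open TensorProduct

section Aux
variable {A R : Type*} [CommRing A] [CommRing R] [Algebra A R] [Module.Flat A R] (a : R)

/-- Regularity pulls back along injective maps. -/
theorem reg_of_injective {N N' : Type*} [AddCommGroup N] [Module A N]
    [AddCommGroup N'] [Module A N'] (f : N →ₗ[A] N') (hf : Function.Injective f)
    (hreg : IsSMulRegular (R ⊗[A] N') a) : IsSMulRegular (R ⊗[A] N) a := by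
  have hF : Function.Injective (f.baseChange R) := by
    rw [LinearMap.baseChange_eq_ltensor]
    exact Module.Flat.lTensor_preserves_injective_linearMap f hf
  intro x y hxy
  apply hF
  apply hreg
  simpa only [map_smul] using congrArg (f.baseChange R) hxy

/-- Regularity for the middle term of a short exact sequence. -/
theorem reg_of_exact {N' N N'' : Type*} [AddCommGroup N] [Module A N]
    [AddCommGroup N'] [Module A N'] [AddCommGroup N''] [Module A N'']
    (f : N' →ₗ[A] N) (g : N →ₗ[A] N'') (hf : Function.Injective f)
    (hex : Function.Exact f g)
    (h' : IsSMulRegular (R ⊗[A] N') a) (h'' : IsSMulRegular (R ⊗[A] N'') a) :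
    IsSMulRegular (R ⊗[A] N) a := by
  have hF : Function.Injective (f.baseChange R) := by
    rw [LinearMap.baseChange_eq_ltensor]
    exact Module.Flat.lTensor_preserves_injective_linearMap f hf
  have hEx : Function.Exact (f.baseChange R) (g.baseChange R) := by
    have := Module.Flat.lTensor_exact R hex
    rwa [show (f.lTensor R : R ⊗[A] N' →ₗ[A] R ⊗[A] N) = (f.baseChange R).restrictScalars A by
        ext; simp [LinearMap.baseChange_eq_ltensor],
      show (g.lTensor R : R ⊗[A] N →ₗ[A] R ⊗[A] N'') = (g.baseChange R).restrictScalars A by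
        ext; simp [LinearMap.baseChange_eq_ltensor]] at this
  have key : ∀ z : R ⊗[A] N, a • z = 0 → z = 0 := by
    intro z hz
    have hg : g.baseChange R z = 0 := by
      apply h''
      show a • g.baseChange R z = a • (0 : R ⊗[A] N'')
      rw [← map_smul, hz, map_zero, smul_zero]
    obtain ⟨w, hw⟩ := (hEx z).mp hg
    have hw0 : w = 0 := by
      apply h'
      show a • w = a • (0 : R ⊗[A] N')
      apply hF
      rw [map_smul, hw, hz, smul_zero, map_zero]
    rw [← hw, hw0, map_zero]
  intro x y hxy
  have h1 : a • (x - y) = 0 := by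
    rw [smul_sub]
    rw [show a • x = a • y from hxy]
    rw [sub_self]
  exact sub_eq_zero.mp (key _ h1)

end Aux

section B
variable {A R : Type*} [CommRing A] [CommRing R] [Algebra A R] [Module.Flat A R] (a : R)

theorem reg_fiber (p : Ideal A) [p.IsPrime]
    (hp : (a ⊗ₜ[A] (1 : IsLocalRing.ResidueField (Localization.AtPrime p))
        : R ⊗[A] IsLocalRing.ResidueField (Localization.AtPrime p)) ∈
        nonZeroDivisors (R ⊗[A] IsLocalRing.ResidueField (Localization.AtPrime p))) :
    IsSMulRegular (R ⊗[A] (A ⧸ p)) a := by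
  set κ := IsLocalRing.ResidueField (Localization.AtPrime p) with hκ
  have hsmul : ∀ z : R ⊗[A] κ, a • z = (a ⊗ₜ[A] (1:κ)) * z := by
    intro z
    induction z using TensorProduct.induction_on with
    | zero => simp
    | tmul r k =>
        rw [Algebra.TensorProduct.tmul_mul_tmul, one_mul, TensorProduct.smul_tmul']
        rfl
    | add x y hx hy => rw [smul_add, mul_add, hx, hy]
  have regκ : IsSMulRegular (R ⊗[A] κ) a := by
    intro x y hxy
    have h1 : (a ⊗ₜ[A] (1:κ)) * (x - y) = 0 := by
      rw [mul_sub, ← hsmul, ← hsmul]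
      rw [show a • x = a • y from hxy]
      rw [sub_self]
    have := (mem_nonZeroDivisors_iff.mp hp).2 _ (by rw [mul_comm]; exact h1)
    exact sub_eq_zero.mp this
  have hker : ∀ b : A, algebraMap A κ b = 0 ↔ b ∈ p := by
    intro b
    rw [IsScalarTower.algebraMap_apply A (Localization.AtPrime p) κ]
    rw [show (algebraMap (Localization.AtPrime p) κ) = IsLocalRing.residue (Localization.AtPrime p) from rfl, IsLocalRing.residue_eq_zero_iff]
    exact IsLocalization.AtPrime.to_map_mem_maximal_iff (Localization.AtPrime p) p b
  have hle : p ≤ LinearMap.ker (Algebra.linearMap A κ) := fun b hb => by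
    rw [LinearMap.mem_ker, Algebra.linearMap_apply]
    exact (hker b).mpr hb
  refine reg_of_injective a (Submodule.liftQ p (Algebra.linearMap A κ) hle) ?_ regκ
  rw [← LinearMap.ker_eq_bot, Submodule.ker_liftQ_eq_bot']
  · ext b
    simpa using (hker b).symm

omit [Module.Flat A R] in
theorem reg_top : IsSMulRegular (R ⊗[A] (A ⧸ (⊤ : Ideal A))) a := by
  haveI : Subsingleton (A ⧸ (⊤ : Ideal A)) := Ideal.Quotient.subsingleton_iff.mpr rfl
  have hz : ∀ x : R ⊗[A] (A ⧸ (⊤ : Ideal A)), x = 0 := by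
    intro x
    induction x using TensorProduct.induction_on with
    | zero => rfl
    | tmul r q => rw [Subsingleton.elim q 0, tmul_zero]
    | add x y hx hy => rw [hx, hy, add_zero]
  intro x y _
  rw [hz x, hz y]

theorem reg_all [IsNoetherianRing A]
    (hfib : ∀ (p : Ideal A), p.IsPrime → IsSMulRegular (R ⊗[A] (A ⧸ p)) a)
    (I : Ideal A) : IsSMulRegular (R ⊗[A] (A ⧸ I)) a := by
  by_contra hbad
  set S : Set (Ideal A) := {J | ¬ IsSMulRegular (R ⊗[A] (A ⧸ J)) a} with hS
  obtain ⟨J, hJS, hJmax⟩ :=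
    (set_has_maximal_iff_noetherian.mpr (inferInstance : IsNoetherian A A)) S ⟨I, hbad⟩
  apply hJS
  rcases eq_or_ne J ⊤ with rfl | hJtop
  · exact reg_top a
  by_cases hJp : Ideal.IsPrime J
  · exact hfib J hJp
  obtain ⟨b, hb, c, hc, hbc⟩ := (Ideal.not_isPrime_iff.mp hJp).resolve_left hJtop
  -- two bigger ideals
  have hcolon_lt : J < J.colon (Ideal.span {c}) := by
    refine lt_of_le_of_ne (fun i hi => Ideal.mem_colon_span_singleton.mpr (Ideal.mul_mem_right c _ hi))
      fun hEq => hb ?_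
    rw [hEq]
    exact Ideal.mem_colon_span_singleton.mpr hbc
  have hsup_lt : J < J ⊔ Ideal.span {c} := by
    refine lt_of_le_of_ne le_sup_left fun hEq => hc ?_
    rw [hEq]
    exact Submodule.mem_sup_right (Ideal.subset_span rfl)
  have hreg1 : IsSMulRegular (R ⊗[A] (A ⧸ (J.colon (Ideal.span {c})))) a := by
    by_contra hcon
    exact hJmax _ hcon hcolon_lt
  have hreg2 : IsSMulRegular (R ⊗[A] (A ⧸ (J ⊔ Ideal.span {c}))) a := by
    by_contra hcon
    exact hJmax _ hcon hsup_lt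
  -- the short exact sequence  A⧸(J:c) --c--> A⧸J --> A⧸(J ⊔ (c)) --> 0
  have hcomap : J.colon (Ideal.span {c}) ≤ Submodule.comap (LinearMap.lsmul A A c) J := by
    intro b' hb'
    simpa [mul_comm] using Ideal.mem_colon_span_singleton.mp hb'
  set f : (A ⧸ J.colon (Ideal.span {c})) →ₗ[A] (A ⧸ J) :=
    Submodule.mapQ _ _ (LinearMap.lsmul A A c) hcomap with hf
  have hcomap2 : J ≤ Submodule.comap (LinearMap.id : A →ₗ[A] A) (J ⊔ Ideal.span {c}) :=
    fun x hx => Submodule.mem_sup_left hx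
  set g : (A ⧸ J) →ₗ[A] (A ⧸ (J ⊔ Ideal.span {c})) :=
    Submodule.mapQ _ _ LinearMap.id hcomap2 with hg
  have hfinj : Function.Injective f := by
    intro x y hxy
    obtain ⟨x, rfl⟩ := Submodule.Quotient.mk_surjective _ x
    obtain ⟨y, rfl⟩ := Submodule.Quotient.mk_surjective _ y
    rw [hf, Submodule.mapQ_apply, Submodule.mapQ_apply, Submodule.Quotient.eq] at hxy
    rw [Submodule.Quotient.eq]
    refine Ideal.mem_colon_span_singleton.mpr ?_
    have heq : (x - y) * c = c • x - c • y := by simp only [smul_eq_mul]; ring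
    rw [heq]
    exact hxy
  have hexact : Function.Exact f g := by
    intro y
    obtain ⟨y, rfl⟩ := Submodule.Quotient.mk_surjective _ y
    constructor
    · intro hy
      rw [hg, Submodule.mapQ_apply, LinearMap.id_coe, id_eq,
        Submodule.Quotient.mk_eq_zero] at hy
      obtain ⟨i, hi, s, hs, rfl⟩ := Submodule.mem_sup.mp hy
      obtain ⟨t, rfl⟩ := Ideal.mem_span_singleton'.mp hs
      refine ⟨Submodule.Quotient.mk t, ?_⟩
      rw [hf, Submodule.mapQ_apply, Submodule.Quotient.eq]
      have heq : ((LinearMap.lsmul A A) c) t - (i + t * c) = -i := by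
        simp [LinearMap.lsmul_apply, smul_eq_mul]; ring
      rw [heq]
      exact neg_mem hi
    · rintro ⟨t, ht⟩
      obtain ⟨t, rfl⟩ := Submodule.Quotient.mk_surjective _ t
      rw [hf, Submodule.mapQ_apply] at ht
      rw [hg, Submodule.mapQ_apply, LinearMap.id_coe, id_eq, Submodule.Quotient.mk_eq_zero]
      have : y - c • t ∈ J := (Submodule.Quotient.eq _).mp ht.symm
      have h1 : y - c • t ∈ J ⊔ Ideal.span {c} := Submodule.mem_sup_left this
      have h2 : c • t ∈ J ⊔ Ideal.span {c} :=
        Submodule.mem_sup_right (Ideal.mem_span_singleton'.mpr ⟨t, by simp [smul_eq_mul, mul_comm]⟩)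
      simpa using add_mem h1 h2
  exact reg_of_exact a f g hfinj hexact hreg1 hreg2

theorem mem_of_reg (I : Ideal A) (hreg : IsSMulRegular (R ⊗[A] (A ⧸ I)) a)
    (y : R) (hy : a * y ∈ I • (⊤ : Submodule A R)) : y ∈ I • (⊤ : Submodule A R) := by
  set e := TensorProduct.tensorQuotEquivQuotSMul R I with he
  have h1 : a • (y ⊗ₜ[A] (1 : A ⧸ I)) = (a * y) ⊗ₜ[A] (1 : A ⧸ I) := by
    rw [TensorProduct.smul_tmul']
    rfl
  have h2 : e ((a * y) ⊗ₜ[A] (1 : A ⧸ I)) = Submodule.Quotient.mk (a * y) := by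
    have := TensorProduct.tensorQuotEquivQuotSMul_tmul_mk (M := R) I (a * y) 1
    simpa using this
  have h3 : a • (y ⊗ₜ[A] (1 : A ⧸ I)) = 0 := by
    rw [h1, ← e.map_eq_zero_iff, h2, Submodule.Quotient.mk_eq_zero]
    exact hy
  have h4 : (y ⊗ₜ[A] (1 : A ⧸ I)) = 0 := by
    apply hreg
    show a • (y ⊗ₜ[A] (1 : A ⧸ I)) = a • (0 : R ⊗[A] (A ⧸ I))
    rw [h3, smul_zero]
  have h5 : e (y ⊗ₜ[A] (1 : A ⧸ I)) = Submodule.Quotient.mk y := by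
    have := TensorProduct.tensorQuotEquivQuotSMul_tmul_mk (M := R) I y 1
    simpa using this
  rw [← Submodule.Quotient.mk_eq_zero, ← h5, h4, map_zero]

theorem main_flat [IsNoetherianRing A]
    (hfib : ∀ (p : Ideal A), p.IsPrime → IsSMulRegular (R ⊗[A] (A ⧸ p)) a) :
    Module.Flat A (R ⧸ Ideal.span {a}) := by
  rw [Module.Flat.iff_lTensor_injective']
  intro I
  set M := R ⧸ Ideal.span {a} with hM
  set π : R →ₗ[A] M := (Ideal.Quotient.mkₐ A (Ideal.span {a})).toLinearMap with hπ
  have hπsurj : Function.Surjective π := Ideal.Quotient.mkₐ_surjective A _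
  refine (injective_iff_map_eq_zero (LinearMap.lTensor M I.subtype)).mpr ?_
  intro x hx
  obtain ⟨w, rfl⟩ := LinearMap.rTensor_surjective (I : Submodule A A) hπsurj x
  -- naturality square
  have hnat : ∀ v : R ⊗[A] I,
      LinearMap.lTensor M I.subtype (LinearMap.rTensor I π v) =
      LinearMap.rTensor A π (LinearMap.lTensor R I.subtype v) := by
    intro v
    induction v using TensorProduct.induction_on with
    | zero => simp
    | tmul r i => simp
    | add v₁ v₂ h₁ h₂ => simp [map_add, h₁, h₂]
  set u : R := TensorProduct.rid A R (LinearMap.lTensor R I.subtype w) with hu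
  have hnat2 : ∀ v : R ⊗[A] A,
      TensorProduct.rid A M (LinearMap.rTensor A π v) = π (TensorProduct.rid A R v) := by
    intro v
    induction v using TensorProduct.induction_on with
    | zero => simp
    | tmul r b => simp [TensorProduct.rid_tmul]
    | add v₁ v₂ h₁ h₂ => simp [map_add, h₁, h₂]
  have hπu : π u = 0 := by
    rw [hu, ← hnat2, ← hnat, hx, map_zero]
  obtain ⟨y, hy⟩ := Ideal.mem_span_singleton'.mp
    ((Ideal.Quotient.eq_zero_iff_mem).mp (by simpa [hπ] using hπu))
  -- u = y * a ; rewrite as a * y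
  have huy : u = a * y := by rw [← hy, mul_comm]
  have hmem : ∀ v : R ⊗[A] I,
      TensorProduct.rid A R (LinearMap.lTensor R I.subtype v) ∈ I • (⊤ : Submodule A R) := by
    intro v
    induction v using TensorProduct.induction_on with
    | zero => simp
    | tmul r i =>
        simp only [LinearMap.lTensor_tmul, Submodule.coe_subtype, TensorProduct.rid_tmul]
        exact Submodule.smul_mem_smul i.2 Submodule.mem_top
    | add v₁ v₂ h₁ h₂ => simpa [map_add] using Submodule.add_mem _ h₁ h₂
  have hymem : y ∈ I • (⊤ : Submodule A R) :=
    mem_of_reg a I (reg_all a hfib I) y (by rw [← huy, hu]; exact hmem w)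
  -- represent a * y as the image of an element of R ⊗ I killed by π.rTensor
  have hrep : ∀ y' ∈ I • (⊤ : Submodule A R), ∃ t : R ⊗[A] I,
      TensorProduct.rid A R (LinearMap.lTensor R I.subtype t) = a * y' ∧
      LinearMap.rTensor I π t = 0 := by
    intro y' hy'
    refine Submodule.smul_induction_on hy' ?_ ?_
    · intro i hi r _
      refine ⟨(a * r) ⊗ₜ[A] ⟨i, hi⟩, ?_, ?_⟩
      · simp only [LinearMap.lTensor_tmul, Submodule.coe_subtype, TensorProduct.rid_tmul]
        rw [mul_smul_comm]
      · simp only [LinearMap.rTensor_tmul]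
        have : π (a * r) = 0 := by
          simp [hπ, Ideal.Quotient.eq_zero_iff_mem,
            Ideal.mem_span_singleton'.mpr ⟨r, mul_comm r a⟩]
        rw [this, TensorProduct.zero_tmul]
    · rintro y₁ y₂ ⟨t₁, ht₁, ht₁'⟩ ⟨t₂, ht₂, ht₂'⟩
      exact ⟨t₁ + t₂, by rw [map_add, map_add, ht₁, ht₂, mul_add], by
        rw [map_add, ht₁', ht₂', add_zero]⟩
  obtain ⟨t, ht, ht'⟩ := hrep y hymem
  have hwt : w = t := by
    have hinj : Function.Injective (LinearMap.lTensor R I.subtype) :=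
      Module.Flat.lTensor_preserves_injective_linearMap _ Subtype.val_injective
    apply hinj
    apply (TensorProduct.rid A R).injective
    rw [ht, ← huy, ← hu]
  rw [hwt, ht']

end B

/-- If `A → R` is a flat homomorphism of commutative Noetherian rings and
`a : R` has non-zerodivisor image in every fiber ring `R ⊗_A κ(p)`, then `R/aR` is flat
over `A`. -/
theorem quotient_flat_of_fiberwise_regular
    (A R : Type*) [CommRing A] [CommRing R]
    [IsNoetherianRing A] [IsNoetherianRing R]
    [Algebra A R] [Module.Flat A R] (a : R)
    (h : ∀ (p : Ideal A) (_ : p.IsPrime),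
      (a ⊗ₜ[A] (1 : IsLocalRing.ResidueField (Localization.AtPrime p))
        : R ⊗[A] IsLocalRing.ResidueField (Localization.AtPrime p)) ∈
        nonZeroDivisors (R ⊗[A] IsLocalRing.ResidueField (Localization.AtPrime p))) :
    Module.Flat A (R ⧸ Ideal.span {a}) := by
  exact main_flat a fun p hp => by
    haveI := hp
    exact reg_fiber a p (h p hp)
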